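/- Let g ∈ ℂ[x_1,x_2] be a squarefree nonconstant polynomial that is weighted homogeneous of some degree d for some weights (α_1,α_2) with α_1,α_2 > 0, and assume g ∈ (x_1,x_2)^2. Then every common prime factor in ℂ[x_2,x_3] of the substituted partial derivatives g'_{x_1}(x_2x_3, x_2) and g'_{x_2}(x_2x_3, x_2) is associated to x_2; that is, up to units, x_2 is the only irreducible common factor of these two polynomials. -/

import Mathlib

open MvPolynomial

private lemma coeff_pderiv' {σ : Type*} [DecidableEq σ] (i : σ) (p : MvPolynomial σ ℂ)
    (m : σ →₀ ℕ) :
    coeff m (pderiv i p) = ((m i + 1 : ℕ) : ℂ) * coeff (m + Finsupp.single i 1) p := by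
  induction p using MvPolynomial.induction_on' with
  | add p q hp hq => simp [hp, hq, mul_add]
  | monomial u a =>
    rw [pderiv_monomial, coeff_monomial, coeff_monomial]
    by_cases h : u = m + Finsupp.single i 1
    · subst h
      have h1 : m + Finsupp.single i 1 - Finsupp.single i 1 = m := by
        ext j; simp [Finsupp.single_apply]
      have h2 : (m + Finsupp.single i 1 : σ →₀ ℕ) i = m i + 1 := by simp
      rw [if_pos h1, if_pos rfl, h2]
      push_cast; ring
    · rw [if_neg h]
      by_cases hui : u i = 0
      · simp [hui]
      · have : ¬ (u - Finsupp.single i 1 = m) := by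
          intro hm
          apply h
          rw [← hm]
          ext j
          by_cases hj : j = i
          · subst hj; simp [Nat.sub_add_cancel (Nat.one_le_iff_ne_zero.2 hui)]
          · simp [Finsupp.single_apply, hj, Ne.symm hj]
        rw [if_neg this, mul_zero]

private lemma totalDegree_pderiv_lt {σ : Type*} [DecidableEq σ] (i : σ)
    (p : MvPolynomial σ ℂ) (h : pderiv i p ≠ 0) :
    (pderiv i p).totalDegree < p.totalDegree := by
  have key : ∀ m ∈ (pderiv i p).support, (m.sum fun _ e => e) + 1 ≤ p.totalDegree := by
    intro m hm
    rw [mem_support_iff, coeff_pderiv'] at hm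
    have h2 : m + Finsupp.single i 1 ∈ p.support := by
      rw [mem_support_iff]; intro h0; rw [h0, mul_zero] at hm; exact hm rfl
    have := le_totalDegree h2
    rw [Finsupp.sum_add_index (by simp) (by simp)] at this
    simpa [Finsupp.sum_single_index] using this
  obtain ⟨m, hm⟩ := support_nonempty.2 h
  have hpos : 0 < p.totalDegree := lt_of_lt_of_le (Nat.succ_pos _) (key m hm)
  rw [totalDegree, Finset.sup_lt_iff (by exact hpos)]
  intro b hb
  exact lt_of_lt_of_le (Nat.lt_succ_self _) (key b hb)

private lemma exists_pderiv_ne_zero {σ : Type*} [DecidableEq σ] (p : MvPolynomial σ ℂ)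
    (h : p.totalDegree ≠ 0) : ∃ i, pderiv i p ≠ 0 := by
  rw [Ne, totalDegree_eq_zero_iff] at h
  push_neg at h
  obtain ⟨m, hm, i, hi⟩ := h
  refine ⟨i, fun h0 => ?_⟩
  have : coeff (m - Finsupp.single i 1) (pderiv i p) = 0 := by rw [h0]; simp
  rw [coeff_pderiv'] at this
  have hms : m - Finsupp.single i 1 + Finsupp.single i 1 = m := by
    ext j
    by_cases hj : j = i
    · subst hj; simp [Nat.sub_add_cancel (Nat.one_le_iff_ne_zero.2 hi)]
    · simp [Finsupp.single_apply, hj, Ne.symm hj]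
  rw [hms] at this
  rcases mul_eq_zero.1 this with h1 | h2
  · exact Nat.cast_ne_zero.2 (Nat.succ_ne_zero _) h1
  · exact (mem_support_iff.1 hm) h2


-- top homogeneous component is nonzero
private lemma topComponent_ne_zero {σ : Type*} (p : MvPolynomial σ ℂ) (hp : p ≠ 0) :
    homogeneousComponent p.totalDegree p ≠ 0 := by
  obtain ⟨m, hm, hms⟩ := Finset.exists_mem_eq_sup p.support (support_nonempty.2 hp)
      (fun m => m.sum fun _ e => e)
  intro h0
  have : coeff m (homogeneousComponent p.totalDegree p) = 0 := by rw [h0]; simp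
  rw [coeff_homogeneousComponent] at this
  have hdeg : m.degree = p.totalDegree := by
    rw [totalDegree, hms, Finsupp.degree, Finsupp.sum]
    rfl
  rw [if_pos hdeg] at this
  exact mem_support_iff.1 hm this

private lemma totalDegree_le_mul {σ : Type*} (p q : MvPolynomial σ ℂ) (hp : p ≠ 0) (hq : q ≠ 0) :
    p.totalDegree + q.totalDegree ≤ (p * q).totalDegree := by
  set dp := p.totalDegree
  set dq := q.totalDegree
  have key : homogeneousComponent (dp + dq) (p * q)
      = homogeneousComponent dp p * homogeneousComponent dq q := by
    conv_lhs => rw [← sum_homogeneousComponent p, ← sum_homogeneousComponent q]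
    rw [Finset.sum_mul_sum, map_sum]
    rw [Finset.sum_congr rfl (fun i hi => map_sum _ _ _)]
    have hcomp : ∀ i ∈ Finset.range (dp + 1), ∀ j ∈ Finset.range (dq + 1),
        homogeneousComponent (dp + dq) (homogeneousComponent i p * homogeneousComponent j q)
        = if dp + dq = i + j then homogeneousComponent i p * homogeneousComponent j q
          else 0 := by
      intro i _ j _
      exact homogeneousComponent_of_mem
        ((homogeneousComponent_isHomogeneous i p).mul (homogeneousComponent_isHomogeneous j q))
    rw [Finset.sum_congr rfl (fun i hi => Finset.sum_congr rfl (fun j hj => hcomp i hi j hj))]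
    rw [Finset.sum_eq_single dp]
    · rw [Finset.sum_eq_single dq]
      · rw [if_pos rfl]
      · intro j hj hjne
        rw [if_neg (by omega)]
      · intro h; exact absurd (Finset.self_mem_range_succ dq) h
    · intro i hi hine
      apply Finset.sum_eq_zero
      intro j hj
      rw [Finset.mem_range] at hi hj
      rw [if_neg (by omega)]
    · intro h; exact absurd (Finset.self_mem_range_succ dp) h
  have hne : homogeneousComponent (dp + dq) (p * q) ≠ 0 := by
    rw [key]
    exact mul_ne_zero (topComponent_ne_zero p hp) (topComponent_ne_zero q hq)
  by_contra hlt
  push_neg at hlt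
  exact hne (homogeneousComponent_eq_zero _ _ hlt)

private lemma prime_X0 : Prime (X 0 : MvPolynomial (Fin 2) ℂ) := by
  rw [← (MulEquiv.prime_iff (finSuccEquiv ℂ 1).toRingEquiv.toMulEquiv
    (p := (X 0 : MvPolynomial (Fin 2) ℂ)))]
  simpa [finSuccEquiv_X_zero] using Polynomial.prime_X (R := MvPolynomial (Fin 1) ℂ)

private lemma prime_X1 : Prime (X 1 : MvPolynomial (Fin 2) ℂ) := by
  rw [← (MulEquiv.prime_iff (renameEquiv ℂ (Equiv.swap (0 : Fin 2) 1)).toRingEquiv.toMulEquiv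
    (p := (X 1 : MvPolynomial (Fin 2) ℂ)))]
  have : (renameEquiv ℂ (Equiv.swap (0 : Fin 2) 1)) (X 1) = X 0 := by
    simp [renameEquiv_apply, rename_X]
  show Prime ((renameEquiv ℂ (Equiv.swap (0 : Fin 2) 1)) (X 1))
  rw [this]
  exact prime_X0

private lemma eq_C_of_totalDegree_eq_zero {σ : Type*} [DecidableEq σ] (p : MvPolynomial σ ℂ)
    (h : p.totalDegree = 0) : p = C (coeff 0 p) := by
  rw [totalDegree_eq_zero_iff] at h
  ext m
  by_cases hm : m = 0
  · subst hm; simp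
  · rw [coeff_C, if_neg (Ne.symm hm)]
    by_contra h0
    have hm' : m ∈ p.support := mem_support_iff.2 h0
    exact hm (Finsupp.ext (fun j => h m hm' j))


private lemma X_mul_pderiv_monomial (i : Fin 2) (m : Fin 2 →₀ ℕ) (c : ℂ) :
    X i * pderiv i (monomial m c) = monomial m (((m i : ℕ) : ℂ) * c) := by
  rw [pderiv_monomial]
  by_cases h0 : m i = 0
  · simp [h0]
  · have hX : (X i : MvPolynomial (Fin 2) ℂ) = monomial (Finsupp.single i 1) 1 := rfl
    rw [hX, monomial_mul]
    have hs : Finsupp.single i 1 + (m - Finsupp.single i 1) = m := by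
      ext j
      by_cases hj : j = i
      · subst hj; simp [Nat.succ_le_iff, Nat.add_sub_cancel' (Nat.one_le_iff_ne_zero.2 h0)]
      · simp [Finsupp.single_apply, hj, Ne.symm hj]
    rw [hs]
    congr 1
    ring

private lemma euler (g : MvPolynomial (Fin 2) ℂ) (α1 α2 d : ℚ)
    (h : ∀ m ∈ g.support, α1 * (m 0 : ℚ) + α2 * (m 1 : ℚ) = d) :
    C (α1 : ℂ) * (X 0 * pderiv 0 g) + C (α2 : ℂ) * (X 1 * pderiv 1 g) = C (d : ℂ) * g := by
  calc C (α1 : ℂ) * (X 0 * pderiv 0 g) + C (α2 : ℂ) * (X 1 * pderiv 1 g)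
      = ∑ m ∈ g.support, (C (α1 : ℂ) * (X 0 * pderiv 0 (monomial m (coeff m g)))
          + C (α2 : ℂ) * (X 1 * pderiv 1 (monomial m (coeff m g)))) := by
        conv_lhs => rw [g.as_sum]
        rw [map_sum, map_sum, Finset.mul_sum, Finset.mul_sum, Finset.mul_sum, Finset.mul_sum,
          ← Finset.sum_add_distrib]
    _ = ∑ m ∈ g.support, C (d : ℂ) * monomial m (coeff m g) := by
        apply Finset.sum_congr rfl
        intro m hm
        rw [X_mul_pderiv_monomial, X_mul_pderiv_monomial, C_mul_monomial, C_mul_monomial,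
          C_mul_monomial, ← map_add]
        congr 1
        have hc := congrArg (fun x : ℚ => (x : ℂ)) (h m hm)
        push_cast at hc
        linear_combination (coeff m g) * hc
    _ = C (d : ℂ) * g := by rw [← Finset.mul_sum, ← g.as_sum]

private lemma derivs_no_common (g : MvPolynomial (Fin 2) ℂ) (hsq : Squarefree g)
    (hnc : g.totalDegree ≠ 0)
    (hwh : ∃ (α1 α2 : ℚ) (d : ℚ), 0 < α1 ∧ 0 < α2 ∧
      ∀ m ∈ g.support, α1 * (m 0 : ℚ) + α2 * (m 1 : ℚ) = d)
    (p : MvPolynomial (Fin 2) ℂ) (hp : Prime p)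
    (h0 : p ∣ pderiv 0 g) (h1 : p ∣ pderiv 1 g) : False := by
  obtain ⟨α1, α2, d, hα1, hα2, hd⟩ := hwh
  have hne : ∃ m ∈ g.support, ∃ i, m i ≠ 0 := by
    by_contra hc
    push_neg at hc
    exact hnc ((totalDegree_eq_zero_iff _ g).2 hc)
  obtain ⟨m, hm, i, hi⟩ := hne
  have hd0 : d ≠ 0 := by
    have hdm := hd m hm
    have hge1 : (1 : ℚ) ≤ m 0 ∨ (1 : ℚ) ≤ m 1 := by
      fin_cases i
      · exact Or.inl (by exact_mod_cast Nat.one_le_iff_ne_zero.2 hi)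
      · exact Or.inr (by exact_mod_cast Nat.one_le_iff_ne_zero.2 hi)
    have hm0 : (0 : ℚ) ≤ (m 0 : ℚ) := Nat.cast_nonneg _
    have hm1 : (0 : ℚ) ≤ (m 1 : ℚ) := Nat.cast_nonneg _
    intro h
    rw [h] at hdm
    rcases hge1 with h' | h' <;> nlinarith
  have heuler := euler g α1 α2 d hd
  have hpg : p ∣ g := by
    have hdvd : p ∣ C (d : ℂ) * g := by
      rw [← heuler]
      exact dvd_add ((h0.mul_left (X 0)).mul_left _) ((h1.mul_left (X 1)).mul_left _)
    have hu : IsUnit (C (d : ℂ) : MvPolynomial (Fin 2) ℂ) :=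
      (isUnit_iff_ne_zero.2 (by exact_mod_cast hd0)).map (C : ℂ →+* MvPolynomial (Fin 2) ℂ)
    exact (hu.dvd_mul_left).1 hdvd
  obtain ⟨t, ht⟩ := hpg
  have hpt : ¬ p ∣ t := by
    rintro ⟨s, hs⟩
    exact hp.not_unit (hsq p ⟨s, by rw [ht, hs]; ring⟩)
  have key : ∀ i : Fin 2, p ∣ pderiv i p := by
    intro j
    have hdj : p ∣ pderiv j g := by fin_cases j <;> assumption
    rw [ht, pderiv_mul] at hdj
    have h2 : p ∣ pderiv j p * t := by
      have := dvd_sub hdj (dvd_mul_right p (pderiv j t))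
      rwa [add_sub_cancel_right] at this
    rcases hp.dvd_or_dvd h2 with h | h
    · exact h
    · exact absurd h hpt
  have hptd : p.totalDegree ≠ 0 := by
    intro h
    have hC := eq_C_of_totalDegree_eq_zero p h
    have hc : coeff 0 p ≠ 0 := fun h0' => hp.ne_zero (by rw [hC, h0', map_zero])
    exact hp.not_unit (hC ▸ (isUnit_iff_ne_zero.2 hc).map (C : ℂ →+* MvPolynomial (Fin 2) ℂ))
  obtain ⟨j, hj⟩ := exists_pderiv_ne_zero p hptd
  obtain ⟨t', ht'⟩ := key j
  have ht'0 : t' ≠ 0 := fun h => hj (by rw [ht', h, mul_zero])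
  have hle := totalDegree_le_mul p t' hp.ne_zero ht'0
  rw [← ht'] at hle
  exact absurd (totalDegree_pderiv_lt j p hj) (by omega)


private noncomputable def phi : MvPolynomial (Fin 2) ℂ →ₐ[ℂ] MvPolynomial (Fin 2) ℂ :=
  aeval ![(X 0 : MvPolynomial (Fin 2) ℂ) * X 1, X 0]

private lemma phi_X0 : phi (X 0) = X 0 * X 1 := by simp [phi]

private lemma phi_X1 : phi (X 1) = X 0 := by simp [phi]

/-- every polynomial, multiplied by a suitable power of `X 0`, lies in the image of `phi`. -/
private lemma exists_pow_mul_mem_range (f : MvPolynomial (Fin 2) ℂ) :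
    ∃ (N : ℕ) (Q : MvPolynomial (Fin 2) ℂ), f * X 0 ^ N = phi Q := by
  induction f using MvPolynomial.induction_on with
  | C a => exact ⟨0, C a, by simp [phi]⟩
  | add p q hp hq =>
    obtain ⟨N1, Q1, h1⟩ := hp
    obtain ⟨N2, Q2, h2⟩ := hq
    refine ⟨N1 + N2, Q1 * X 1 ^ N2 + Q2 * X 1 ^ N1, ?_⟩
    rw [map_add, map_mul, map_mul, map_pow, map_pow, phi_X1, ← h1, ← h2]
    ring
  | mul_X p j hp =>
    obtain ⟨N, Q, hQ⟩ := hp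
    fin_cases j
    · refine ⟨N, Q * X 1, ?_⟩
      show p * X 0 * X 0 ^ N = phi (Q * X 1)
      rw [map_mul, phi_X1, ← hQ]
      ring
    · refine ⟨N + 1, Q * X 0, ?_⟩
      show p * X 1 * X 0 ^ (N + 1) = phi (Q * X 0)
      rw [map_mul, phi_X0, ← hQ]
      ring

private lemma phi_injective : Function.Injective phi := by
  set K := FractionRing (MvPolynomial (Fin 2) ℂ)
  set ι : MvPolynomial (Fin 2) ℂ →+* K := algebraMap _ K with hι
  have hinj : Function.Injective ι := IsFractionRing.injective _ _
  have hX1 : ι (X 1) ≠ 0 := fun h => X_ne_zero 1 (hinj (by rw [h, map_zero]))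
  set j : MvPolynomial (Fin 2) ℂ →ₐ[ℂ] K :=
    aeval ![ι (X 1), ι (X 0) / ι (X 1)] with hj
  have hcomp : ∀ f, j (phi f) = ι f := by
    intro f
    have : (j.comp phi : MvPolynomial (Fin 2) ℂ →ₐ[ℂ] K)
        = (IsScalarTower.toAlgHom ℂ (MvPolynomial (Fin 2) ℂ) K) := by
      apply MvPolynomial.algHom_ext
      intro i
      fin_cases i
      · show j (phi (X 0)) = ι (X 0)
        rw [phi_X0, map_mul]
        have e0 : j (X 0) = ι (X 1) := by simp [hj]
        have e1 : j (X 1) = ι (X 0) / ι (X 1) := by simp [hj]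
        rw [e0, e1]
        rw [mul_comm]; exact div_mul_cancel₀ _ hX1
      · show j (phi (X 1)) = ι (X 1)
        rw [phi_X1]
        simp [hj]
    exact DFunLike.congr_fun this f
  intro a b hab
  apply hinj
  rw [← hcomp, ← hcomp, hab]


/-- For `g ∈ ℂ[x₁,x₂]` squarefree, nonconstant, weighted homogeneous for some
positive weights, with `g ∈ (x₁,x₂)²`, every common prime factor of
`g'_{x₁}(x₂x₃,x₂)` and `g'_{x₂}(x₂x₃,x₂)` in `ℂ[x₂,x₃]` is associated to `x₂`.
Here `ℂ[x₂,x₃]` is `MvPolynomial (Fin 2) ℂ` with variable `0` standing for `x₂`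
and variable `1` for `x₃`, and the substitution sends `x₁ ↦ x₂x₃`, `x₂ ↦ x₂`. -/
theorem stmt_9 (g : MvPolynomial (Fin 2) ℂ)
    (hsq : Squarefree g) (hnc : g.totalDegree ≠ 0)
    (hwh : ∃ (α1 α2 : ℚ) (d : ℚ), 0 < α1 ∧ 0 < α2 ∧
      ∀ m ∈ g.support, α1 * (m 0 : ℚ) + α2 * (m 1 : ℚ) = d)
    (hsq2 : g ∈ (Ideal.span {(X 0 : MvPolynomial (Fin 2) ℂ), X 1}) ^ 2) :
    ∀ q : MvPolynomial (Fin 2) ℂ, Prime q →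
      q ∣ aeval ![(X 0 : MvPolynomial (Fin 2) ℂ) * X 1, X 0] (pderiv 0 g) →
      q ∣ aeval ![(X 0 : MvPolynomial (Fin 2) ℂ) * X 1, X 0] (pderiv 1 g) →
      Associated q (X 0 : MvPolynomial (Fin 2) ℂ) := by
  intro q hq hq0 hq1
  by_contra hqX
  have hq0' : q ∣ phi (pderiv 0 g) := hq0
  have hq1' : q ∣ phi (pderiv 1 g) := hq1
  obtain ⟨N, Q, hNQ⟩ := exists_pow_mul_mem_range q
  have hQ0 : Q ≠ 0 := by
    intro h
    rw [h, map_zero] at hNQ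
    rcases mul_eq_zero.1 hNQ with h' | h'
    · exact hq.ne_zero h'
    · exact pow_ne_zero _ (X_ne_zero 0) h'
  have htrans : ∀ ab : MvPolynomial (Fin 2) ℂ, q ∣ phi ab →
      ∃ M : ℕ, Q ∣ ab * X 1 ^ (N + M) := by
    rintro ab ⟨u, hu⟩
    obtain ⟨M, U, hMU⟩ := exists_pow_mul_mem_range u
    refine ⟨M, U, ?_⟩
    apply phi_injective
    rw [map_mul, map_mul, map_pow, phi_X1, hu, ← hNQ, ← hMU]
    ring
  obtain ⟨M0, hQa⟩ := htrans _ hq0'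
  obtain ⟨M1, hQb⟩ := htrans _ hq1'
  obtain ⟨k, w, hw, hQw⟩ := WfDvdMonoid.max_power_factor hQ0 prime_X1.irreducible
  by_cases hwu : IsUnit w
  · have hdvd : q ∣ X 0 ^ k * phi w := by
      rw [← phi_X1, ← map_pow, ← map_mul, ← hQw]
      exact ⟨X 0 ^ N, hNQ.symm⟩
    rcases hq.dvd_or_dvd hdvd with h | h
    · exact hqX ((hq.irreducible).associated_of_dvd prime_X0.irreducible (hq.dvd_of_dvd_pow h))
    · exact hq.not_unit (isUnit_of_dvd_unit h (hwu.map phi))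
  · have hw0 : w ≠ 0 := by
      intro h
      rw [h, mul_zero] at hQw
      exact hQ0 hQw
    obtain ⟨p, hpirr, hpw⟩ := WfDvdMonoid.exists_irreducible_factor hwu hw0
    have hp : Prime p := (UniqueFactorizationMonoid.irreducible_iff_prime).1 hpirr
    have hpX1 : ¬ p ∣ X 1 := by
      intro h
      have hassoc := hpirr.associated_of_dvd prime_X1.irreducible h
      exact hw (hassoc.symm.dvd.trans hpw)
    have hpQ : p ∣ Q := hpw.trans ⟨X 1 ^ k, by rw [hQw]; ring⟩
    have hpa : p ∣ pderiv 0 g := by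
      rcases hp.dvd_or_dvd (hpQ.trans hQa) with h | h
      · exact h
      · exact absurd (hp.dvd_of_dvd_pow h) hpX1
    have hpb : p ∣ pderiv 1 g := by
      rcases hp.dvd_or_dvd (hpQ.trans hQb) with h | h
      · exact h
      · exact absurd (hp.dvd_of_dvd_pow h) hpX1
    exact derivs_no_common g hsq hnc hwh p hp hpa hpb
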